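/- If M is a left K_par G-module with induced partial action α, then the canonical map ι: M → KG ⊗_{G_par} M, m ↦ 1 ⊗_{G_par} m, is injective, and the universal global action on KG ⊗_{G_par} M is a globalization of α. -/

import Mathlib

/-- The defining relations of Exel's semigroup `S(G)` of a group `G`:
`[1] = 1`, `[s⁻¹][s][t] = [s⁻¹][st]`, `[s][t][t⁻¹] = [st][t⁻¹]`. -/
inductive ExelRel (G : Type*) [Group G] : FreeMonoid G → FreeMonoid G → Prop
  | one : ExelRel G (FreeMonoid.of 1) 1
  | left (s t : G) : ExelRel G
      (FreeMonoid.of s⁻¹ * FreeMonoid.of s * FreeMonoid.of t)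
      (FreeMonoid.of s⁻¹ * FreeMonoid.of (s * t))
  | right (s t : G) : ExelRel G
      (FreeMonoid.of s * FreeMonoid.of t * FreeMonoid.of t⁻¹)
      (FreeMonoid.of (s * t) * FreeMonoid.of t⁻¹)

/-- The congruence on the free monoid on `G` generated by the Exel relations. -/
def ExelCon (G : Type*) [Group G] : Con (FreeMonoid G) := conGen (ExelRel G)

/-- Exel's semigroup (an inverse monoid) `S(G)` of the group `G`. -/
abbrev ExelMonoid (G : Type*) [Group G] := (ExelCon G).Quotient

/-- The canonical generator `[g]` of `S(G)`. -/
def ExelMonoid.of {G : Type*} [Group G] (g : G) : ExelMonoid G :=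
  (ExelCon G).mk' (FreeMonoid.of g)

/-- The idempotent `e_g := [g][g⁻¹]` in `S(G)`. -/
def ExelMonoid.e {G : Type*} [Group G] (g : G) : ExelMonoid G :=
  ExelMonoid.of g * ExelMonoid.of g⁻¹

/-- The partial group algebra `K_par G`: the semigroup `K`-algebra of Exel's semigroup. -/
abbrev KparG (K G : Type*) [CommRing K] [Group G] := MonoidAlgebra K (ExelMonoid G)

/-- The canonical generator `[g]` of `K_par G`. -/
noncomputable def pr (K : Type*) {G : Type*} [CommRing K] [Group G] (g : G) : KparG K G :=
  MonoidAlgebra.of K (ExelMonoid G) (ExelMonoid.of g)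

/-- The idempotent `e_g := [g][g⁻¹]` in `K_par G`. -/
noncomputable def eK (K : Type*) {G : Type*} [CommRing K] [Group G] (g : G) : KparG K G :=
  pr K g * pr K g⁻¹

open TensorProduct

/-- The group algebra `KG`. -/
abbrev KG (K G : Type*) [CommRing K] [Group G] := MonoidAlgebra K G

/-- The relation `KG`-submodule of `KG ⊗[K] M` defining `KG ⊗_{G_par} M` for a left
`K_par G`-module `M` with its induced partial action:
generated by the elements `g ⊗ [h]·m − gh ⊗ e_{h⁻¹}·m`. -/
noncomputable def glueRel (K G M : Type*) [CommRing K] [Group G]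
    [AddCommGroup M] [Module K M] [Module (KparG K G) M] [IsScalarTower K (KparG K G) M] :
    Submodule (KG K G) (KG K G ⊗[K] M) :=
  Submodule.span (KG K G) {w : KG K G ⊗[K] M | ∃ (g h : G) (m : M),
    w = MonoidAlgebra.of K G g ⊗ₜ[K] (pr K h • m) -
      MonoidAlgebra.of K G (g * h) ⊗ₜ[K] (eK K h⁻¹ • m)}

/-- The universal globalization `Λ(M) = KG ⊗_{G_par} M` of a left `K_par G`-module `M`. -/
noncomputable abbrev Glob (K G M : Type*) [CommRing K] [Group G]
    [AddCommGroup M] [Module K M] [Module (KparG K G) M] [IsScalarTower K (KparG K G) M] :=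
  KG K G ⊗[K] M ⧸ glueRel K G M

section Aux

variable {G : Type*} [Group G]

lemma ExelRel.toEq {x y : FreeMonoid G} (h : ExelRel G x y) :
    (ExelCon G).mk' x = (ExelCon G).mk' y :=
  (Con.eq _).mpr (ConGen.Rel.of x y h)

lemma ExelMonoid.of_one : ExelMonoid.of (1 : G) = 1 := by
  have := ExelRel.toEq (ExelRel.one (G := G))
  simpa [ExelMonoid.of] using this

lemma ExelMonoid.right_rel (s t : G) :
    ExelMonoid.of s * ExelMonoid.of t * ExelMonoid.of t⁻¹ =
      ExelMonoid.of (s * t) * ExelMonoid.of t⁻¹ := by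
  have := ExelRel.toEq (ExelRel.right s t)
  simpa [ExelMonoid.of, map_mul] using this

lemma ExelMonoid.sandwich (t : G) :
    ExelMonoid.of t * ExelMonoid.of t⁻¹ * ExelMonoid.of t = ExelMonoid.of t := by
  have h := ExelMonoid.right_rel t t⁻¹
  rw [inv_inv] at h
  rw [h, mul_inv_cancel, ExelMonoid.of_one, one_mul]

lemma ExelMonoid.key (f h : G) :
    ExelMonoid.of f * ExelMonoid.of h =
      ExelMonoid.of (f * h) * ExelMonoid.of h⁻¹ * ExelMonoid.of h := by
  conv_lhs => rw [← ExelMonoid.sandwich h]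
  rw [← mul_assoc, ← mul_assoc, ExelMonoid.right_rel]

variable (K : Type*) [CommRing K]

lemma pr_mul (f h : G) : pr K f * pr K h = pr K (f * h) * pr K h⁻¹ * pr K h := by
  simp only [pr, ← map_mul, ExelMonoid.key f h]

lemma eK_mul_pr (g : G) : eK K g * pr K g = pr K g := by
  simp only [eK, pr, ← map_mul, ExelMonoid.sandwich]

lemma pr_one : pr K (1 : G) = 1 := by
  rw [pr, ExelMonoid.of_one, map_one]

/-- The `K`-linear map `KG → K_par G`, `g ↦ [g]`. -/
noncomputable def PhiMap : KG K G →ₗ[K] KparG K G :=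
  MonoidAlgebra.mapDomainLinearMap K K (ExelMonoid.of (G := G))

lemma PhiMap_single (g : G) (k : K) :
    PhiMap K (MonoidAlgebra.single g k) = MonoidAlgebra.single (ExelMonoid.of g) k :=
  MonoidAlgebra.mapDomainLinearMap_single _ _ _

lemma PhiMap_one : PhiMap K (1 : KG K G) = 1 := by
  have : (1 : KG K G) = MonoidAlgebra.single (1 : G) (1 : K) := rfl
  rw [this, PhiMap_single, ExelMonoid.of_one]; rfl

lemma PhiMap_of (g : G) : PhiMap K (MonoidAlgebra.of K G g) = pr K g := by
  rw [MonoidAlgebra.of_apply, PhiMap_single]; rfl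

variable {M : Type*} [AddCommGroup M] [Module K M] [Module (KparG K G) M]
  [IsScalarTower K (KparG K G) M]

lemma single_smul (x : ExelMonoid G) (k : K) (m : M) :
    (MonoidAlgebra.single x k : KparG K G) • m =
      k • ((MonoidAlgebra.single x 1 : KparG K G) • m) := by
  rw [← smul_assoc, MonoidAlgebra.smul_single', mul_one]

lemma keyL (h : G) (m : M) (b : KG K G) :
    PhiMap K b • (pr K h • m) =
      PhiMap K (b * MonoidAlgebra.of K G h) • (eK K h⁻¹ • m) := by
  induction b using MonoidAlgebra.induction_linear with
  | zero => simp
  | add f g hf hg =>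
      rw [map_add, add_mul, map_add, add_smul, add_smul, hf, hg]
  | single f k =>
      have e2 : (MonoidAlgebra.single f k : KG K G) * MonoidAlgebra.of K G h =
          MonoidAlgebra.single (f * h) k := by
        rw [MonoidAlgebra.of_apply, MonoidAlgebra.single_mul_single, mul_one]
      rw [e2, PhiMap_single, PhiMap_single,
        single_smul K (ExelMonoid.of f) k, single_smul K (ExelMonoid.of (f * h)) k]
      show k • (pr K f • pr K h • m) = k • (pr K (f * h) • eK K h⁻¹ • m)
      rw [smul_smul, smul_smul]
      congr 1
      rw [eK, inv_inv, ← mul_assoc, ← pr_mul]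

/-- The retraction bilinear map `KG ⊗ M → M`, `a ⊗ m ↦ Φ(a) • m`. -/
noncomputable def phiRetr : KG K G ⊗[K] M →ₗ[K] M :=
  TensorProduct.lift (LinearMap.mk₂ K (fun a m => PhiMap K a • m)
    (fun a b m => by rw [map_add, add_smul])
    (fun c a m => by rw [map_smul, smul_assoc])
    (fun a m n => by rw [smul_add])
    (fun c a m => by rw [smul_comm]))

@[simp] lemma phiRetr_tmul (a : KG K G) (m : M) :
    phiRetr K (a ⊗ₜ[K] m) = PhiMap K a • m := rfl

lemma phiRetr_glueRel {w : KG K G ⊗[K] M} (hw : w ∈ glueRel K G M) :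
    phiRetr K w = 0 := by
  have main : ∀ w ∈ glueRel K G M, ∀ a : KG K G, phiRetr K (a • w) = 0 := by
    intro w hw
    induction hw using Submodule.span_induction with
    | mem x hx =>
        obtain ⟨g, h, m, rfl⟩ := hx
        intro a
        rw [smul_sub, smul_tmul', smul_tmul', map_sub, phiRetr_tmul, phiRetr_tmul]
        rw [smul_eq_mul, smul_eq_mul, keyL K h m (a * MonoidAlgebra.of K G g),
          mul_assoc, ← map_mul, sub_self]
    | zero => intro a; rw [smul_zero, map_zero]
    | add x y hx hy ihx ihy => intro a; rw [smul_add, map_add, ihx a, ihy a, add_zero]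
    | smul b x hx ih => intro a; rw [smul_smul]; exact ih (a * b)
  simpa using main w hw 1

end Aux

/-- If `M` is a left `K_par G`-module with induced partial action `α` (`M_g = e_g·M`,
`α_g = [g]·-`), then the canonical map `ι : M → KG ⊗_{G_par} M`, `m ↦ 1 ⊗ m`, is
injective, and the universal global action on `KG ⊗_{G_par} M` is a globalization of `α`:
`ι` intertwines `α` with the `G`-action, `ι(M_g) = g·ι(M) ∩ ι(M)` for all `g`, and
`KG ⊗_{G_par} M = Σ_{g ∈ G} g·ι(M)`. -/
theorem glob_is_globalization (K G M : Type*) [CommRing K] [Group G]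
    [AddCommGroup M] [Module K M] [Module (KparG K G) M] [IsScalarTower K (KparG K G) M] :
    let ι : M → Glob K G M :=
      fun m => Submodule.Quotient.mk ((1 : KG K G) ⊗ₜ[K] m)
    Function.Injective ι ∧
      (∀ (g : G) (m : M),
        Submodule.Quotient.mk (MonoidAlgebra.of K G g ⊗ₜ[K] (eK K g⁻¹ • m)) =
          ι (pr K g • m)) ∧
      (∀ g : G,
        (Set.range fun m : M =>
            (Submodule.Quotient.mk (MonoidAlgebra.of K G g ⊗ₜ[K] m) : Glob K G M)) ∩
          Set.range ι = Set.range fun m : M => ι (eK K g • m)) ∧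
      Submodule.span K {w : Glob K G M | ∃ (g : G) (m : M),
        w = Submodule.Quotient.mk (MonoidAlgebra.of K G g ⊗ₜ[K] m)} = ⊤ := by
  intro ι
  -- key consequence of the retraction
  have retr : ∀ (x y : KG K G ⊗[K] M),
      (Submodule.Quotient.mk x : Glob K G M) = Submodule.Quotient.mk y →
        phiRetr K x = phiRetr K y := by
    intro x y hxy
    have : x - y ∈ glueRel K G M := (Submodule.Quotient.eq _).mp hxy
    have h0 := phiRetr_glueRel K this
    rw [map_sub, sub_eq_zero] at h0
    exact h0
  have hinj : Function.Injective ι := by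
    intro m m' h
    have := retr _ _ h
    simpa [PhiMap_one] using this
  have hequiv : ∀ (g : G) (m : M),
      Submodule.Quotient.mk (MonoidAlgebra.of K G g ⊗ₜ[K] (eK K g⁻¹ • m)) =
        ι (pr K g • m) := by
    intro g m
    rw [Submodule.Quotient.eq]
    have hx : (1 : KG K G) ⊗ₜ[K] (pr K g • m) -
        MonoidAlgebra.of K G g ⊗ₜ[K] (eK K g⁻¹ • m) ∈ glueRel K G M :=
      Submodule.subset_span ⟨1, g, m, by rw [map_one, one_mul]⟩
    simpa [neg_sub] using Submodule.neg_mem _ hx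
  refine ⟨hinj, hequiv, ?_, ?_⟩
  · intro g
    ext x
    constructor
    · rintro ⟨⟨m, rfl⟩, m', hm'⟩
      have h1 := retr _ _ hm'.symm
      simp only [phiRetr_tmul, PhiMap_one, one_smul, PhiMap_of] at h1
      refine ⟨pr K g • m, ?_⟩
      show ι (eK K g • pr K g • m) = _
      rw [smul_smul, eK_mul_pr, h1]
      exact hm'
    · rintro ⟨m, rfl⟩
      constructor
      · refine ⟨eK K g⁻¹ • (pr K g⁻¹ • m), ?_⟩
        show (Submodule.Quotient.mk (MonoidAlgebra.of K G g ⊗ₜ[K]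
            (eK K g⁻¹ • (pr K g⁻¹ • m))) : Glob K G M) = ι (eK K g • m)
        rw [hequiv g (pr K g⁻¹ • m)]
        show ι (pr K g • pr K g⁻¹ • m) = ι (eK K g • m)
        rw [smul_smul]
        rfl
      · exact ⟨eK K g • m, rfl⟩
  · rw [Submodule.eq_top_iff']
    intro x
    obtain ⟨y, rfl⟩ := Submodule.Quotient.mk_surjective _ x
    induction y using TensorProduct.induction_on with
    | zero =>
        rw [Submodule.Quotient.mk_zero]; exact Submodule.zero_mem _
    | tmul a m =>
        induction a using MonoidAlgebra.induction_on with
        | of g => exact Submodule.subset_span ⟨g, m, rfl⟩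
        | add f f' hf hf' =>
            rw [TensorProduct.add_tmul, Submodule.Quotient.mk_add]
            exact Submodule.add_mem _ hf hf'
        | smul r f hf =>
            rw [← TensorProduct.smul_tmul', Submodule.Quotient.mk_smul]
            exact Submodule.smul_mem _ r hf
    | add y z hy hz =>
        rw [Submodule.Quotient.mk_add]
        exact Submodule.add_mem _ hy hz
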